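/- arXiv:math/0610582 — 3 statements merged into one kernel-verified Lean document; each statement's English description precedes it below -/
import Mathlib

section
/- If S ⊆ ℕ is multiplicative and Σ_{p prime, p ∉ S} 1/p < ∞, then the series Σ_{n=1}^∞ |μ*_S(n)| θ(n)/n converges. In particular, Σ_p Σ_{a≥1} |μ*_S(p^a)| θ(p^a)/p^a ≤ 4(Σ_{p∈S} 1/p² + Σ_{p∉S} 1/p). -/
def udivisors (n : ℕ) : Finset ℕ := n.divisors.filter fun d => Nat.gcd d (n / d) = 1

def mustar (n : ℕ) : ℤ := (-1) ^ n.primeFactors.card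

def rhoR (S : Set ℕ) [DecidablePred (· ∈ S)] (n : ℕ) : ℝ := if n ∈ S then 1 else 0

/-- real-valued `μ*_S` -/
def mustarSR (S : Set ℕ) [DecidablePred (· ∈ S)] (n : ℕ) : ℝ :=
  ∑ d ∈ udivisors n, rhoR S d * (mustar (n / d) : ℝ)

def theta (n : ℕ) : ℕ := 2 ^ n.primeFactors.card

lemma mem_udivisors {n d : ℕ} : d ∈ udivisors n ↔ (d ∣ n ∧ n ≠ 0) ∧ Nat.gcd d (n / d) = 1 := by
  simp [udivisors, Nat.mem_divisors]

lemma udivisors_one : udivisors 1 = {1} := by decide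

lemma mustar_one : mustar 1 = 1 := by simp [mustar]

lemma mustarSR_one (S : Set ℕ) [DecidablePred (· ∈ S)] (h1 : 1 ∈ S) : mustarSR S 1 = 1 := by
  simp [mustarSR, udivisors_one, rhoR, h1, mustar_one]

lemma mustarSR_zero (S : Set ℕ) [DecidablePred (· ∈ S)] : mustarSR S 0 = 0 := by
  simp [mustarSR, udivisors]

lemma mustar_prime_pow {p a : ℕ} (hp : p.Prime) (ha : a ≠ 0) : mustar (p ^ a) = -1 := by
  rw [mustar, Nat.primeFactors_prime_pow ha hp]
  simp

lemma udivisors_prime_pow {p a : ℕ} (hp : p.Prime) (ha : a ≠ 0) :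
    udivisors (p ^ a) = {1, p ^ a} := by
  ext d
  rw [mem_udivisors]
  constructor
  · rintro ⟨⟨hd, -⟩, hg⟩
    obtain ⟨i, hi, rfl⟩ := (Nat.dvd_prime_pow hp).mp hd
    rcases Nat.eq_zero_or_pos i with rfl | hi0
    · simp
    rcases eq_or_lt_of_le hi with rfl | hlt
    · simp
    exfalso
    have hq : p ^ a / p ^ i = p ^ (a - i) := Nat.pow_div hi hp.pos
    rw [hq] at hg
    have h1 : p ∣ p ^ i := dvd_pow_self p hi0.ne'
    have h2 : p ∣ p ^ (a - i) := dvd_pow_self p (by omega)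
    have := Nat.dvd_gcd h1 h2
    rw [hg] at this
    exact hp.one_lt.ne' (Nat.eq_one_of_dvd_one this)
  · intro hd
    rw [Finset.mem_insert, Finset.mem_singleton] at hd
    rcases hd with rfl | rfl
    · refine ⟨⟨one_dvd _, pow_ne_zero _ hp.pos.ne'⟩, by simp⟩
    · exact ⟨⟨dvd_rfl, pow_ne_zero _ hp.pos.ne'⟩, by
        rw [Nat.div_self (pow_pos hp.pos a)]; simp⟩

lemma mustarSR_prime_pow (S : Set ℕ) [DecidablePred (· ∈ S)] (h1 : 1 ∈ S) {p a : ℕ}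
    (hp : p.Prime) (ha : a ≠ 0) : mustarSR S (p ^ a) = rhoR S (p ^ a) - 1 := by
  have hne : (1 : ℕ) ≠ p ^ a := by
    intro h
    exact (Nat.one_lt_pow ha hp.one_lt).ne h
  rw [mustarSR, udivisors_prime_pow hp ha, Finset.sum_insert (by simpa using hne),
    Finset.sum_singleton, Nat.div_one, Nat.div_self (pow_pos hp.pos a),
    mustar_prime_pow hp ha, mustar_one]
  simp [rhoR, h1]
  ring

lemma udivisors_prime_pow_mul {p a m : ℕ} (hp : p.Prime) (hpm : ¬ p ∣ m) (hm : 0 < m)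
    (ha : a ≠ 0) :
    udivisors (p ^ a * m) = udivisors m ∪ (udivisors m).image (p ^ a * ·) := by
  have hpa : 0 < p ^ a := pow_pos hp.pos a
  have hN : p ^ a * m ≠ 0 := by positivity
  ext d
  rw [mem_udivisors, Finset.mem_union, Finset.mem_image]
  constructor
  · rintro ⟨⟨hd, -⟩, hg⟩
    have hd0 : d ≠ 0 := by rintro rfl; exact hN (Nat.eq_zero_of_zero_dvd hd)
    set i := d.factorization p with hi
    have hpi : p ^ i ∣ d := Nat.ordProj_dvd d p
    set e := d / p ^ i with he
    have hde : d = p ^ i * e := (Nat.mul_div_cancel' hpi).symm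
    have hpe : ¬ p ∣ e := Nat.not_dvd_ordCompl hp hd0
    have hcpe : Nat.Coprime (p ^ a) e := (Nat.Prime.coprime_iff_not_dvd hp).mpr hpe |>.pow_left a
    have hem : e ∣ m := by
      have : e ∣ p ^ a * m := dvd_trans (hde ▸ dvd_mul_left e (p ^ i)) hd
      exact (Nat.Coprime.dvd_of_dvd_mul_left hcpe.symm this)
    have hia : i ≤ a := by
      have h1 : p ^ i ∣ p ^ a * m := hpi.trans hd
      have : p ^ i ∣ p ^ a :=
        (Nat.Coprime.dvd_of_dvd_mul_right
          (((Nat.Prime.coprime_iff_not_dvd hp).mpr hpm).pow_left i) h1)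
      exact (Nat.pow_dvd_pow_iff_le_right hp.one_lt).mp this
    rcases Nat.eq_zero_or_pos i with hi0 | hipos
    · -- i = 0, d = e divides m
      left
      rw [hi0, pow_zero, one_mul] at hde
      rw [hde]
      refine mem_udivisors.mpr ⟨⟨hem, hm.ne'⟩, ?_⟩
      rw [hde, Nat.mul_div_assoc _ hem] at hg
      exact Nat.Coprime.coprime_dvd_right (dvd_mul_left _ _) hg
    · -- i = a
      have hia' : i = a := by
        by_contra hne
        have hlt : i < a := lt_of_le_of_ne hia hne
        -- quotient = p^(a-i) * (m / e)
        have hq : p ^ a * m / d = p ^ (a - i) * (m / e) := by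
          rw [hde]
          have : p ^ a * m = (p ^ i * e) * (p ^ (a - i) * (m / e)) := by
            rw [mul_mul_mul_comm, ← pow_add, Nat.add_sub_cancel' hia,
              Nat.mul_div_cancel' hem]
          rw [this, Nat.mul_div_cancel_left _ (Nat.pos_of_ne_zero (by rw [← hde]; exact hd0))]
        rw [hq] at hg
        have h1 : p ∣ d := hde ▸ Dvd.dvd.mul_right (dvd_pow_self p hipos.ne') e
        have h2 : p ∣ p ^ (a - i) * (m / e) :=
          Dvd.dvd.mul_right (dvd_pow_self p (by omega)) _
        have := Nat.dvd_gcd h1 h2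
        rw [hg] at this
        exact hp.one_lt.ne' (Nat.eq_one_of_dvd_one this)
      right
      refine ⟨e, ?_, by rw [hde, hia']⟩
      refine mem_udivisors.mpr ⟨⟨hem, hm.ne'⟩, ?_⟩
      have hq : p ^ a * m / d = m / e := by
        rw [hde, hia']
        have : p ^ a * m = (p ^ a * e) * (m / e) := by
          rw [mul_assoc, Nat.mul_div_cancel' hem]
        rw [this, Nat.mul_div_cancel_left _
          (Nat.mul_pos hpa (Nat.pos_of_dvd_of_pos hem hm))]
      rw [hq] at hg
      rw [hde] at hg
      exact Nat.Coprime.coprime_dvd_left (dvd_mul_left _ _) hg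
  · rintro (hd | ⟨e, he, rfl⟩)
    · rw [mem_udivisors] at hd
      obtain ⟨⟨hdm, -⟩, hg⟩ := hd
      have hpd : ¬ p ∣ d := fun h => hpm (h.trans hdm)
      refine ⟨⟨hdm.trans (dvd_mul_left m _), hN⟩, ?_⟩
      rw [Nat.mul_div_assoc _ hdm]
      exact Nat.Coprime.mul_right (((Nat.Prime.coprime_iff_not_dvd hp).mpr hpd).symm.pow_right a) hg
    · rw [mem_udivisors] at he
      obtain ⟨⟨hem, -⟩, hg⟩ := he
      have hpe : ¬ p ∣ m / e := fun h => hpm (h.trans (Nat.div_dvd_of_dvd hem))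
      refine ⟨⟨mul_dvd_mul_left _ hem, hN⟩, ?_⟩
      have hq : p ^ a * m / (p ^ a * e) = m / e := by
        have : p ^ a * m = (p ^ a * e) * (m / e) := by
          rw [mul_assoc, Nat.mul_div_cancel' hem]
        rw [this, Nat.mul_div_cancel_left _
          (Nat.mul_pos hpa (Nat.pos_of_dvd_of_pos hem hm))]
      rw [hq]
      exact Nat.Coprime.mul (((Nat.Prime.coprime_iff_not_dvd hp).mpr hpe).pow_left a) hg

lemma mustar_prime_pow_mul {p a m : ℕ} (hp : p.Prime) (hpm : ¬ p ∣ m) (hm : 0 < m)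
    (ha : a ≠ 0) : mustar (p ^ a * m) = - mustar m := by
  rw [mustar, mustar, Nat.primeFactors_mul (pow_ne_zero _ hp.pos.ne') hm.ne',
    Nat.primeFactors_prime_pow ha hp]
  have hpn : p ∉ m.primeFactors := fun h => hpm (Nat.dvd_of_mem_primeFactors h)
  have : {p} ∪ m.primeFactors = insert p m.primeFactors := rfl
  rw [this, Finset.card_insert_of_notMem hpn]
  ring

section Main
variable (S : Set ℕ) [DecidablePred (· ∈ S)]

lemma rhoR_mul (hmul : ∀ m n : ℕ, 0 < m → 0 < n → Nat.Coprime m n → (m * n ∈ S ↔ m ∈ S ∧ n ∈ S))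
    {m n : ℕ} (hm : 0 < m) (hn : 0 < n) (h : Nat.Coprime m n) :
    rhoR S (m * n) = rhoR S m * rhoR S n := by
  unfold rhoR
  by_cases h1 : m ∈ S <;> by_cases h2 : n ∈ S <;>
    simp [h1, h2, hmul m n hm hn h]

variable (hmul : ∀ m n : ℕ, 0 < m → 0 < n → Nat.Coprime m n → (m * n ∈ S ↔ m ∈ S ∧ n ∈ S))
include hmul

lemma mustarSR_prime_pow_mul {p a m : ℕ} (hp : p.Prime) (hpm : ¬ p ∣ m) (hm : 0 < m)
    (ha : a ≠ 0) :
    mustarSR S (p ^ a * m) = (rhoR S (p ^ a) - 1) * mustarSR S m := by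
  have hpa : 0 < p ^ a := pow_pos hp.pos a
  have hdisj : Disjoint (udivisors m) ((udivisors m).image (p ^ a * ·)) := by
    rw [Finset.disjoint_right]
    intro d hd hd'
    rw [Finset.mem_image] at hd
    obtain ⟨e, he, rfl⟩ := hd
    have hdm : p ^ a * e ∣ m := (mem_udivisors.mp hd').1.1
    exact hpm ((dvd_pow_self p ha).trans ((dvd_mul_right _ e).trans hdm))
  rw [mustarSR, udivisors_prime_pow_mul hp hpm hm ha, Finset.sum_union hdisj,
    Finset.sum_image (fun x _ y _ h => Nat.eq_of_mul_eq_mul_left hpa h)]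
  have e1 : ∀ d ∈ udivisors m, rhoR S d * (mustar (p ^ a * m / d) : ℝ)
      = - (rhoR S d * (mustar (m / d) : ℝ)) := by
    intro d hd
    obtain ⟨⟨hdm, -⟩, -⟩ := mem_udivisors.mp hd
    have hq : p ^ a * m / d = p ^ a * (m / d) := Nat.mul_div_assoc _ hdm
    have hd0 : 0 < m / d := Nat.div_pos (Nat.le_of_dvd hm hdm) (Nat.pos_of_dvd_of_pos hdm hm)
    have hpd : ¬ p ∣ m / d := fun h => hpm (h.trans (Nat.div_dvd_of_dvd hdm))
    rw [hq, mustar_prime_pow_mul hp hpd hd0 ha]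
    push_cast
    ring
  have e2 : ∀ d ∈ udivisors m, rhoR S (p ^ a * d) * (mustar (p ^ a * m / (p ^ a * d)) : ℝ)
      = rhoR S (p ^ a) * (rhoR S d * (mustar (m / d) : ℝ)) := by
    intro d hd
    obtain ⟨⟨hdm, -⟩, -⟩ := mem_udivisors.mp hd
    have hd0 : 0 < d := Nat.pos_of_dvd_of_pos hdm hm
    have hpd : ¬ p ∣ d := fun h => hpm (h.trans hdm)
    have hq : p ^ a * m / (p ^ a * d) = m / d := by
      have : p ^ a * m = (p ^ a * d) * (m / d) := by
        rw [mul_assoc, Nat.mul_div_cancel' hdm]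
      rw [this, Nat.mul_div_cancel_left _ (Nat.mul_pos hpa hd0)]
    rw [hq, rhoR_mul S hmul hpa hd0
      (((Nat.Prime.coprime_iff_not_dvd hp).mpr hpd).pow_left a)]
    ring
  rw [Finset.sum_congr rfl e1, Finset.sum_congr rfl e2, Finset.sum_neg_distrib,
    ← Finset.mul_sum]
  rw [mustarSR]
  ring

lemma mustarSR_mult {m n : ℕ} (hm : 0 < m) (hn : 0 < n) (h : Nat.Coprime m n) (h1 : 1 ∈ S) :
    mustarSR S (m * n) = mustarSR S m * mustarSR S n := by
  induction m using Nat.recOnPrimePow generalizing n with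
  | zero => omega
  | one => rw [one_mul, mustarSR_one S h1, one_mul]
  | prime_pow_mul m p k hp hpm hk ih =>
    have hm' : 0 < m := by
      rcases Nat.eq_zero_or_pos m with rfl | h'
      · exact absurd (dvd_zero p) hpm
      · exact h'
    have hcop : Nat.Coprime m n := Nat.Coprime.coprime_dvd_left (dvd_mul_left m _) h
    have hpn : ¬ p ∣ n := by
      intro hd
      have hppk : p ∣ p ^ k * m := (dvd_pow_self p hk.ne').mul_right m
      have := Nat.dvd_gcd hppk hd
      rw [Nat.Coprime] at h
      rw [h] at this
      exact Nat.Prime.one_lt hp |>.ne' (Nat.eq_one_of_dvd_one this)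
    have hpmn : ¬ p ∣ m * n := fun hd => ((Nat.Prime.dvd_mul hp).mp hd).elim hpm hpn
    rw [mul_assoc, mustarSR_prime_pow_mul S hmul hp hpmn (Nat.mul_pos hm' hn) hk.ne',
      mustarSR_prime_pow_mul S hmul hp hpm hm' hk.ne', ih hm' hn hcop, mul_assoc]

end Main

section Analytic
variable (S : Set ℕ) [DecidablePred (· ∈ S)]

/-- the summand function -/
noncomputable def FS (n : ℕ) : ℝ := |mustarSR S n| * (theta n : ℝ) / n

lemma FS_nonneg (n : ℕ) : 0 ≤ FS S n := by
  unfold FS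
  positivity

lemma FS_zero : FS S 0 = 0 := by simp [FS]

lemma FS_one (h1 : 1 ∈ S) : FS S 1 = 1 := by
  simp [FS, mustarSR_one S h1, theta]

lemma theta_mult {m n : ℕ} (hm : m ≠ 0) (hn : n ≠ 0) (h : Nat.Coprime m n) :
    theta (m * n) = theta m * theta n := by
  rw [theta, theta, theta, ← pow_add, Nat.primeFactors_mul hm hn,
    Finset.card_union_of_disjoint (Nat.Coprime.disjoint_primeFactors h)]

lemma FS_mult (h1 : 1 ∈ S)
    (hmul : ∀ m n : ℕ, 0 < m → 0 < n → Nat.Coprime m n → (m * n ∈ S ↔ m ∈ S ∧ n ∈ S))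
    : ∀ {m n : ℕ}, Nat.Coprime m n → FS S (m * n) = FS S m * FS S n := by
  intro m n h
  rcases Nat.eq_zero_or_pos m with rfl | hm
  · have : n = 1 := by simpa [Nat.coprime_zero_left] using h
    subst this
    simp [FS_zero, FS_one S h1]
  rcases Nat.eq_zero_or_pos n with rfl | hn
  · have : m = 1 := by simpa [Nat.coprime_zero_right] using h
    subst this
    simp [FS_zero, FS_one S h1]
  unfold FS
  rw [mustarSR_mult S hmul hm hn h h1, theta_mult hm.ne' hn.ne' h, abs_mul]
  push_cast
  field_simp

lemma theta_prime_pow {p a : ℕ} (hp : p.Prime) (ha : a ≠ 0) : theta (p ^ a) = 2 := by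
  rw [theta, Nat.primeFactors_prime_pow ha hp, Finset.card_singleton, pow_one]

lemma FS_prime_pow (h1 : 1 ∈ S) {p a : ℕ} (hp : p.Prime) (ha : a ≠ 0) :
    FS S (p ^ a) = (if p ^ a ∈ S then 0 else 1) * (2 / (p : ℝ) ^ a) := by
  rw [FS, mustarSR_prime_pow S h1 hp ha, theta_prime_pow hp ha, rhoR]
  push_cast
  by_cases h : p ^ a ∈ S <;> simp [h] <;> ring

lemma FS_prime_pow_le (h1 : 1 ∈ S) {p a : ℕ} (hp : p.Prime) (ha : a ≠ 0) :
    FS S (p ^ a) ≤ 2 / (p : ℝ) ^ a := by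
  rw [FS_prime_pow S h1 hp ha]
  have h2 : (0:ℝ) ≤ 2 / (p : ℝ) ^ a := by positivity
  by_cases h : p ^ a ∈ S <;> simp [h, h2]

end Analytic

section Bounds
variable (S : Set ℕ) [DecidablePred (· ∈ S)]

/-- tail sum at a prime -/
noncomputable def tP (q : Nat.Primes) : ℝ := ∑' a : ℕ, FS S ((q : ℕ) ^ (a + 1))

/-- dominating bound at a prime -/
noncomputable def bP (q : Nat.Primes) : ℝ :=
  if (q : ℕ) ∈ S then 4 / ((q : ℕ) : ℝ) ^ 2 else 4 / ((q : ℕ) : ℝ)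

variable (h1 : 1 ∈ S)
include h1

lemma geom_facts {p : ℕ} (hp : p.Prime) :
    (0 : ℝ) ≤ ((p : ℝ))⁻¹ ∧ ((p : ℝ))⁻¹ < 1 ∧ (1 - ((p : ℝ))⁻¹)⁻¹ ≤ 2 := by
  have h2 : (2 : ℝ) ≤ (p : ℝ) := by exact_mod_cast hp.two_le
  have hp0 : (0 : ℝ) < (p : ℝ) := by linarith
  refine ⟨by positivity, ?_, ?_⟩
  · rw [inv_lt_one_iff₀]; right; linarith
  · have hhalf : ((p : ℝ))⁻¹ ≤ 2⁻¹ := by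
      rw [inv_le_inv₀ hp0 (by norm_num)]; exact h2
    have h12 : (2 : ℝ)⁻¹ ≤ 1 - ((p : ℝ))⁻¹ := by norm_num at hhalf ⊢; linarith
    calc (1 - ((p : ℝ))⁻¹)⁻¹ ≤ ((2 : ℝ)⁻¹)⁻¹ := by
          apply inv_anti₀ (by norm_num) h12
      _ = 2 := by norm_num

lemma summable_FS_shift {p : ℕ} (hp : p.Prime) (k : ℕ) (hk : k ≠ 0) :
    Summable (fun a : ℕ => FS S (p ^ (a + k))) ∧
    ∑' a : ℕ, FS S (p ^ (a + k)) ≤ 4 / (p : ℝ) ^ k := by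
  obtain ⟨hr0, hr1, hinv⟩ := geom_facts S h1 hp
  have hp0 : (0 : ℝ) < (p : ℝ) := by exact_mod_cast hp.pos
  have hle : ∀ a : ℕ, FS S (p ^ (a + k)) ≤ (2 / (p : ℝ) ^ k) * ((p : ℝ))⁻¹ ^ a := by
    intro a
    have := FS_prime_pow_le S h1 hp (a := a + k) (by omega)
    calc FS S (p ^ (a + k)) ≤ 2 / (p : ℝ) ^ (a + k) := this
      _ = (2 / (p : ℝ) ^ k) * ((p : ℝ))⁻¹ ^ a := by
          rw [pow_add]
          field_simp
          rw [← mul_pow, mul_one_div, div_self hp0.ne', one_pow]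
  have hgs : Summable (fun a : ℕ => (2 / (p : ℝ) ^ k) * ((p : ℝ))⁻¹ ^ a) :=
    (summable_geometric_of_lt_one hr0 hr1).mul_left _
  have hsum : Summable (fun a : ℕ => FS S (p ^ (a + k))) :=
    Summable.of_nonneg_of_le (fun a => FS_nonneg S _) hle hgs
  refine ⟨hsum, ?_⟩
  calc ∑' a : ℕ, FS S (p ^ (a + k)) ≤ ∑' a : ℕ, (2 / (p : ℝ) ^ k) * ((p : ℝ))⁻¹ ^ a :=
        Summable.tsum_le_tsum hle hsum hgs
    _ = (2 / (p : ℝ) ^ k) * (1 - ((p : ℝ))⁻¹)⁻¹ := by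
        rw [tsum_mul_left, tsum_geometric_of_lt_one hr0 hr1]
    _ ≤ (2 / (p : ℝ) ^ k) * 2 := by
        apply mul_le_mul_of_nonneg_left hinv (by positivity)
    _ = 4 / (p : ℝ) ^ k := by ring

lemma summable_tP (q : Nat.Primes) : Summable (fun a : ℕ => FS S ((q : ℕ) ^ (a + 1))) := by
  simpa using (summable_FS_shift S h1 q.2 1 one_ne_zero).1

lemma tP_nonneg (q : Nat.Primes) : 0 ≤ tP S q :=
  tsum_nonneg fun a => FS_nonneg S _

lemma tP_le_bP (q : Nat.Primes) : tP S q ≤ bP S q := by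
  obtain ⟨p, hp⟩ := q
  unfold tP bP
  simp only
  by_cases hS : p ∈ S
  · rw [if_pos hS]
    have h2 := summable_FS_shift S h1 hp 2 (by norm_num)
    have hshift : ∑' a : ℕ, FS S (p ^ (a + 1)) = ∑' a : ℕ, FS S (p ^ (a + 2)) := by
      rw [Summable.tsum_eq_zero_add (summable_tP S h1 ⟨p, hp⟩)]
      have h0 : FS S (p ^ (0 + 1)) = 0 := by
        rw [FS_prime_pow S h1 hp (by norm_num)]
        simp [pow_one, hS]
      rw [h0, zero_add]
    rw [hshift]
    simpa using h2.2
  · rw [if_neg hS]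
    have h2 := summable_FS_shift S h1 hp 1 one_ne_zero
    simpa using h2.2

end Bounds

section Final
variable (S : Set ℕ) [DecidablePred (· ∈ S)]

lemma summable_inv_sq_primes : Summable (fun q : Nat.Primes => (1:ℝ) / ((q:ℕ):ℝ)^2) := by
  have h : Summable (fun n : ℕ => (1:ℝ) / (n:ℝ)^2) :=
    Real.summable_one_div_nat_pow.mpr one_lt_two
  exact h.comp_injective Nat.Primes.coe_nat_injective

lemma summable_bP
    (hp : Summable fun p : {p : Nat.Primes // (p : ℕ) ∉ S} => (1 : ℝ) / ((p.1 : ℕ) : ℝ)) :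
    Summable (bP S) := by
  set s : Set Nat.Primes := {q | (q : ℕ) ∈ S} with hs
  rw [← summable_subtype_and_compl (s := s)]
  constructor
  · apply Summable.congr (f := fun x : s => 4 * ((1:ℝ) / ((x.1 : ℕ) : ℝ)^2))
    · exact (((summable_inv_sq_primes).subtype s).mul_left 4)
    · intro x
      unfold bP
      rw [if_pos (show ((x : Nat.Primes) : ℕ) ∈ S from x.2)]
      ring
  · apply Summable.congr (f := fun x : ↥sᶜ => 4 * ((1:ℝ) / ((x.1 : ℕ) : ℝ)))
    · exact hp.mul_left 4
    · intro x
      unfold bP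
      rw [if_neg (show ¬ ((x : Nat.Primes) : ℕ) ∈ S from x.2)]
      ring

lemma tsum_bP
    (hp : Summable fun p : {p : Nat.Primes // (p : ℕ) ∉ S} => (1 : ℝ) / ((p.1 : ℕ) : ℝ)) :
    ∑' q : Nat.Primes, bP S q
      = 4 * ((∑' p : {p : Nat.Primes // (p : ℕ) ∈ S}, (1 : ℝ) / ((p.1 : ℕ) : ℝ) ^ 2)
          + ∑' p : {p : Nat.Primes // (p : ℕ) ∉ S}, (1 : ℝ) / ((p.1 : ℕ) : ℝ)) := by
  set s : Set Nat.Primes := {q | (q : ℕ) ∈ S} with hs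
  rw [← Summable.tsum_subtype_add_tsum_subtype_compl (summable_bP S hp) s]
  have e1 : ∑' (x : s), bP S x = 4 * ∑' p : {p : Nat.Primes // (p : ℕ) ∈ S},
      (1 : ℝ) / ((p.1 : ℕ) : ℝ) ^ 2 := by
    rw [← tsum_mul_left]
    apply tsum_congr
    intro x
    unfold bP
    rw [if_pos (show ((x : Nat.Primes) : ℕ) ∈ S from x.2)]
    ring
  have e2 : ∑' (x : ↥sᶜ), bP S x = 4 * ∑' p : {p : Nat.Primes // (p : ℕ) ∉ S},
      (1 : ℝ) / ((p.1 : ℕ) : ℝ) := by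
    rw [← tsum_mul_left]
    apply tsum_congr
    intro x
    unfold bP
    rw [if_neg (show ¬ ((x : Nat.Primes) : ℕ) ∈ S from x.2)]
    ring
  rw [e1, e2]
  ring

end Final

section Main2
variable (S : Set ℕ) [DecidablePred (· ∈ S)] (h1 : 1 ∈ S)
include h1

lemma summable_FS_pow {p : ℕ} (hp : p.Prime) : Summable (fun a : ℕ => FS S (p ^ a)) := by
  obtain ⟨hr0, hr1, -⟩ := geom_facts S h1 hp
  have hle : ∀ a : ℕ, FS S (p ^ a) ≤ 2 * ((p : ℝ))⁻¹ ^ a := by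
    intro a
    rcases a with _ | a
    · rw [pow_zero, FS_one S h1]
      norm_num
    · calc FS S (p ^ (a + 1)) ≤ 2 / (p : ℝ) ^ (a + 1) := FS_prime_pow_le S h1 hp (by omega)
        _ = 2 * ((p : ℝ))⁻¹ ^ (a + 1) := by rw [div_eq_mul_inv, inv_pow]
  exact Summable.of_nonneg_of_le (fun a => FS_nonneg S _) hle
    ((summable_geometric_of_lt_one hr0 hr1).mul_left _)

lemma tsum_FS_pow_le {p : ℕ} (hp : p.Prime) :
    ∑' a : ℕ, FS S (p ^ a) ≤ Real.exp (tP S ⟨p, hp⟩) := by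
  rw [Summable.tsum_eq_zero_add (summable_FS_pow S h1 hp), pow_zero, FS_one S h1]
  have : ∑' a : ℕ, FS S (p ^ (a + 1)) = tP S ⟨p, hp⟩ := rfl
  rw [this]
  calc 1 + tP S ⟨p, hp⟩ = tP S ⟨p, hp⟩ + 1 := by ring
    _ ≤ Real.exp (tP S ⟨p, hp⟩) := Real.add_one_le_exp _

variable (hmul : ∀ m n : ℕ, 0 < m → 0 < n → Nat.Coprime m n → (m * n ∈ S ↔ m ∈ S ∧ n ∈ S))
  (hp : Summable fun p : {p : Nat.Primes // (p : ℕ) ∉ S} => (1 : ℝ) / ((p.1 : ℕ) : ℝ))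
include hmul hp

lemma summable_FS_main : Summable (fun n : ℕ => FS S (n + 1)) := by
  have htP_sum : Summable (tP S) :=
    Summable.of_nonneg_of_le (tP_nonneg S h1) (tP_le_bP S h1) (summable_bP S hp)
  set C : ℝ := Real.exp (∑' q : Nat.Primes, tP S q) with hC
  have hnorm : ∀ {p : ℕ}, p.Prime → Summable (fun a : ℕ => ‖FS S (p ^ a)‖) := by
    intro p hpp
    exact (summable_FS_pow S h1 hpp).congr
      fun a => (Real.norm_of_nonneg (FS_nonneg S _)).symm
  have key := fun N => EulerProduct.summable_and_hasSum_smoothNumbers_prod_primesBelow_tsum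
    (f := FS S) (FS_one S h1) (fun {m n} h => FS_mult S h1 hmul h) hnorm N
  have hprod_le : ∀ N : ℕ, (∏ p ∈ N.primesBelow, ∑' a : ℕ, FS S (p ^ a)) ≤ C := by
    intro N
    rw [← Finset.prod_attach (N.primesBelow) (fun p => ∑' a : ℕ, FS S (p ^ a))]
    have step1 : ∀ x : {p // p ∈ N.primesBelow}, ∑' a : ℕ, FS S ((x : ℕ) ^ a)
        ≤ Real.exp (tP S ⟨x.1, Nat.prime_of_mem_primesBelow x.2⟩) :=
      fun x => tsum_FS_pow_le S h1 (Nat.prime_of_mem_primesBelow x.2)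
    calc ∏ x ∈ N.primesBelow.attach, ∑' a : ℕ, FS S ((x : ℕ) ^ a)
        ≤ ∏ x ∈ N.primesBelow.attach,
            Real.exp (tP S ⟨x.1, Nat.prime_of_mem_primesBelow x.2⟩) :=
          Finset.prod_le_prod (fun x _ => tsum_nonneg fun a => FS_nonneg S _)
            (fun x _ => step1 x)
      _ = Real.exp (∑ x ∈ N.primesBelow.attach,
            tP S ⟨x.1, Nat.prime_of_mem_primesBelow x.2⟩) := (Real.exp_sum _ _).symm
      _ ≤ C := by
          rw [hC, Real.exp_le_exp]
          have hinj : Function.Injective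
              (fun x : {p // p ∈ N.primesBelow} =>
                (⟨x.1, Nat.prime_of_mem_primesBelow x.2⟩ : Nat.Primes)) := by
            intro x y hxy
            simp only [Subtype.mk.injEq] at hxy
            exact Subtype.ext hxy
          exact le_trans
            (le_of_eq (Finset.sum_map N.primesBelow.attach ⟨_, hinj⟩ (tP S)).symm)
            (Summable.sum_le_tsum (f := tP S) _ (fun q _ => tP_nonneg S h1 q) htP_sum)
  apply summable_of_sum_range_le (c := C) (fun n => FS_nonneg S _)
  intro N
  set I : ℕ → ℝ := Set.indicator (Nat.smoothNumbers (N + 1)) (FS S) with hI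
  have hInn : ∀ j, 0 ≤ I j :=
    fun j => Set.indicator_nonneg (fun i _ => FS_nonneg S i) j
  have hIsum : Summable I := by
    rw [← summable_subtype_iff_indicator]
    exact ((key (N + 1)).2.summable)
  have htsumI : ∑' j, I j ≤ C := by
    rw [← tsum_subtype]
    rw [(key (N + 1)).2.tsum_eq]
    exact hprod_le (N + 1)
  have hmem : ∀ k < N, (k + 1) ∈ Nat.smoothNumbers (N + 1) := by
    intro k hk
    rw [Nat.mem_smoothNumbers]
    refine ⟨by omega, fun q hq => ?_⟩
    have h' : q ∣ k + 1 := Nat.dvd_of_mem_primeFactorsList hq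
    have := Nat.le_of_dvd (by omega) h'
    omega
  calc ∑ k ∈ Finset.range N, FS S (k + 1) = ∑ k ∈ Finset.range N, I (k + 1) := by
        apply Finset.sum_congr rfl
        intro k hk
        rw [hI, Set.indicator_of_mem (hmem k (Finset.mem_range.mp hk))]
    _ ≤ ∑ j ∈ Finset.range (N + 1), I j := by
        rw [Finset.sum_range_succ']
        have := hInn 0
        nlinarith [Finset.sum_nonneg (fun k (_ : k ∈ Finset.range N) => hInn (k + 1))]
    _ ≤ ∑' j, I j := Summable.sum_le_tsum _ (fun j _ => hInn j) hIsum
    _ ≤ C := htsumI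

end Main2

theorem stmt10 (S : Set ℕ) [DecidablePred (· ∈ S)]
    (h1 : 1 ∈ S)
    (hmul : ∀ m n : ℕ, 0 < m → 0 < n → Nat.Coprime m n → (m * n ∈ S ↔ m ∈ S ∧ n ∈ S))
    (hp : Summable fun p : {p : Nat.Primes // (p : ℕ) ∉ S} => (1 : ℝ) / ((p.1 : ℕ) : ℝ)) :
    Summable (fun n : ℕ => |mustarSR S (n + 1)| * (theta (n + 1) : ℝ) / ((n + 1 : ℕ) : ℝ)) ∧
    ∑' (p : Nat.Primes) (a : ℕ),
        |mustarSR S ((p : ℕ) ^ (a + 1))| * (theta ((p : ℕ) ^ (a + 1)) : ℝ)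
          / (((p : ℕ) : ℝ) ^ (a + 1))
      ≤ 4 * ((∑' p : {p : Nat.Primes // (p : ℕ) ∈ S}, (1 : ℝ) / ((p.1 : ℕ) : ℝ) ^ 2)
          + ∑' p : {p : Nat.Primes // (p : ℕ) ∉ S}, (1 : ℝ) / ((p.1 : ℕ) : ℝ)) := by
  constructor
  · exact summable_FS_main S h1 hmul hp
  · have htP_sum : Summable (tP S) :=
      Summable.of_nonneg_of_le (tP_nonneg S h1) (tP_le_bP S h1) (summable_bP S hp)
    have e1 : ∑' (p : Nat.Primes) (a : ℕ),
        |mustarSR S ((p : ℕ) ^ (a + 1))| * (theta ((p : ℕ) ^ (a + 1)) : ℝ)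
          / (((p : ℕ) : ℝ) ^ (a + 1)) = ∑' p : Nat.Primes, tP S p := by
      apply tsum_congr
      intro p
      apply tsum_congr
      intro a
      rw [FS, Nat.cast_pow]
    rw [e1]
    calc ∑' p : Nat.Primes, tP S p ≤ ∑' p : Nat.Primes, bP S p :=
          Summable.tsum_le_tsum (tP_le_bP S h1) htP_sum (summable_bP S hp)
      _ = _ := tsum_bP S hp
end

section
/- Let δ_k = ∏_p (1 − (p−1)^k/(p^k(p^k−1))) and p_n the n-th prime. For N ≥ 5, the tail R_N = −log ∏_{n>N}(1 − (p_n−1)^k/(p_n^k(p_n^k−1))) satisfies R_N < 1/(2(2N+1)). -/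
lemma myNthPrimeGe (n : ℕ) (hn : 4 ≤ n) : 2 * n + 3 ≤ Nat.nth Nat.Prime n := by
  induction n with
  | zero => omega
  | succ m ih =>
    rcases Nat.lt_or_ge m 4 with h | h
    · have hm : m = 3 := by omega
      subst hm
      have h11 : Nat.nth Nat.Prime (Nat.count Nat.Prime 11) = 11 :=
        Nat.nth_count (by norm_num)
      have hc : Nat.count Nat.Prime 11 = 4 := by decide
      rw [hc] at h11
      show 2 * 4 + 3 ≤ Nat.nth Nat.Prime 4
      omega
    · have h1 := ih h
      have hp1 := Nat.prime_nth_prime m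
      have hp2 := Nat.prime_nth_prime (m + 1)
      have hlt : Nat.nth Nat.Prime m < Nat.nth Nat.Prime (m + 1) :=
        (Nat.nth_lt_nth Nat.infinite_setOf_prime).2 (by omega)
      have ho1 : Odd (Nat.nth Nat.Prime m) := hp1.odd_of_ne_two (by omega)
      have ho2 : Odd (Nat.nth Nat.Prime (m + 1)) := hp2.odd_of_ne_two (by omega)
      obtain ⟨a, ha⟩ := ho1
      obtain ⟨b, hb⟩ := ho2
      omega

lemma myHasSum (c : ℝ) (hc : 0 < c) :
    HasSum (fun m : ℕ => 1 / ((c + m) * (c + m + 1))) (1 / c) := by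
  have hnn : ∀ m : ℕ, (0:ℝ) ≤ 1 / ((c + m) * (c + m + 1)) := by
    intro m; positivity
  rw [hasSum_iff_tendsto_nat_of_nonneg hnn]
  have hkey : ∀ n : ℕ,
      ∑ i ∈ Finset.range n, 1 / ((c + i) * (c + i + 1)) = 1 / c - 1 / (c + n) := by
    intro n
    induction n with
    | zero => simp
    | succ m ih =>
      rw [Finset.sum_range_succ, ih]
      have h1 : (0:ℝ) < c + m := by positivity
      have h2 : (0:ℝ) < c + m + 1 := by positivity
      push_cast
      field_simp
      ring
  have htend : Filter.Tendsto (fun n : ℕ => 1 / c - 1 / (c + n)) Filter.atTop (nhds (1/c - 0)) := by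
    apply Filter.Tendsto.const_sub
    have h1 : Filter.Tendsto (fun n : ℕ => c + (n:ℝ)) Filter.atTop Filter.atTop :=
      Filter.tendsto_atTop_add_const_left _ c tendsto_natCast_atTop_atTop
    simpa [one_div, Pi.inv_def] using h1.inv_tendsto_atTop
  simp only [sub_zero] at htend
  exact htend.congr (fun n => (hkey n).symm)

lemma myKey (k : ℕ) (hk : 2 ≤ k) (P c : ℝ) (hc : 5 ≤ c) (hPc : c ≤ P) :
    0 < 1 - (P - 1) ^ k / (P ^ k * (P ^ k - 1)) ∧
    0 ≤ (P - 1) ^ k / (P ^ k * (P ^ k - 1)) ∧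
    -Real.log (1 - (P - 1) ^ k / (P ^ k * (P ^ k - 1))) ≤ 1 / (c ^ 2 - 1) := by
  obtain ⟨j, rfl⟩ : ∃ j, k = j + 2 := ⟨k - 2, by omega⟩
  have hP5 : (5:ℝ) ≤ P := le_trans hc hPc
  set q := P ^ (j + 2) with hqdef
  set A := (P - 1) ^ (j + 2) with hAdef
  have hA0 : 0 ≤ A := pow_nonneg (by linarith) _
  have hAle : A ≤ q - P := by
    have h1 : (P - 1) ^ (j + 1) ≤ P ^ (j + 1) :=
      pow_le_pow_left₀ (by linarith) (by linarith) _
    have h2 : A = (P - 1) ^ (j + 1) * (P - 1) := by rw [hAdef, pow_succ]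
    have h3 : A ≤ P ^ (j + 1) * (P - 1) := by
      rw [h2]; exact mul_le_mul_of_nonneg_right h1 (by linarith)
    have h4 : P ^ (j + 1) * (P - 1) = q - P ^ (j + 1) := by rw [hqdef, pow_succ]; ring
    have h5 : P ≤ P ^ (j + 1) := le_self_pow₀ (by linarith) (by omega)
    linarith
  have hq2 : P ^ 2 ≤ q := pow_le_pow_right₀ (by linarith) (by omega)
  have hP2 : (25:ℝ) ≤ P ^ 2 := by nlinarith
  have hq25 : (25:ℝ) ≤ q := le_trans hP2 hq2
  have hA1 : A ≤ q - 1 := by linarith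
  have hD : 0 < q * (q - 1) := by nlinarith
  have hDA : 0 < q * (q - 1) - A := by nlinarith
  have hx : (P - 1) ^ (j + 2) / (P ^ (j + 2) * (P ^ (j + 2) - 1)) = A / (q * (q - 1)) := rfl
  have hxle : A / (q * (q - 1)) < 1 := by
    rw [div_lt_one hD]; nlinarith
  have hxnn : 0 ≤ A / (q * (q - 1)) := div_nonneg hA0 hD.le
  refine ⟨by rw [hx]; linarith, by rw [hx]; linarith [hxnn], ?_⟩
  rw [hx]
  -- bound -log(1-x) ≤ A/(q(q-1)-A) ≤ 1/(q-1) ≤ 1/(c^2-1)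
  set s := A / (q * (q - 1) - A) with hsdef
  have hs0 : 0 ≤ s := div_nonneg hA0 hDA.le
  have hstep1 : Real.exp (-s) ≤ 1 - A / (q * (q - 1)) := by
    have h1 : 1 + s ≤ Real.exp s := by linarith [Real.add_one_le_exp s]
    have h2 : Real.exp (-s) = 1 / Real.exp s := by
      rw [Real.exp_neg]; ring
    have h3 : Real.exp (-s) ≤ 1 / (1 + s) := by
      rw [h2]
      apply one_div_le_one_div_of_le (by linarith) h1
    have h4 : 1 / (1 + s) = 1 - A / (q * (q - 1)) := by
      rw [hsdef]
      have hq1 : q - 1 ≠ 0 := by linarith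
      have hDA' := hDA.ne'
      field_simp
      ring
    linarith
  have hstep2 : -Real.log (1 - A / (q * (q - 1))) ≤ s := by
    have := Real.log_le_log (Real.exp_pos (-s)) hstep1
    rw [Real.log_exp] at this
    linarith
  have hstep3 : s ≤ 1 / (q - 1) := by
    rw [hsdef, div_le_div_iff₀ hDA (by linarith : (0:ℝ) < q - 1)]
    nlinarith
  have hstep4 : 1 / (q - 1) ≤ 1 / (c ^ 2 - 1) := by
    apply one_div_le_one_div_of_le (by nlinarith)
    nlinarith
  linarith

lemma myAux (N : ℕ) (hN : 5 ≤ N) (x : ℕ → ℝ)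
    (h1 : ∀ m, 0 < 1 - x m) (h0 : ∀ m, 0 ≤ x m)
    (h3 : ∀ m, -Real.log (1 - x m) ≤ 1 / ((2 * ((N:ℝ) + m) + 3) ^ 2 - 1)) :
    -Real.log (∏' m : ℕ, (1 - x m)) < 1 / (2 * (2 * (N : ℝ) + 1)) := by
  have hbound : ∀ m : ℕ, -Real.log (1 - x m) ≤
      1/4 * (1 / (((N:ℝ) + 1 + m) * ((N:ℝ) + 1 + m + 1))) := by
    intro m
    refine le_trans (h3 m) ?_
    have hrw : (2 * ((N:ℝ) + m) + 3) ^ 2 - 1 =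
        4 * (((N:ℝ) + 1 + m) * ((N:ℝ) + 1 + m + 1)) := by ring
    rw [hrw, one_div_mul_one_div]
  have hsumg : HasSum (fun m : ℕ => 1/4 * (1 / (((N:ℝ) + 1 + m) * ((N:ℝ) + 1 + m + 1))))
      (1/4 * (1 / ((N:ℝ) + 1))) :=
    (myHasSum ((N:ℝ) + 1) (by positivity)).mul_left _
  have hL : ∀ m, 0 ≤ -Real.log (1 - x m) := by
    intro m
    have := Real.log_nonpos (le_of_lt (h1 m)) (by linarith [h0 m])
    linarith
  have hsumL : Summable (fun m => -Real.log (1 - x m)) :=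
    Summable.of_nonneg_of_le hL hbound hsumg.summable
  have hsumlog : Summable (fun m => Real.log (1 - x m)) := by
    have := hsumL.neg
    simpa using this
  have hexp : Real.exp (∑' m : ℕ, Real.log (1 - x m)) = ∏' m : ℕ, (1 - x m) := by
    exact Real.rexp_tsum_eq_tprod (f := fun m => 1 - x m) h1 hsumlog
  have hlogprod : Real.log (∏' m : ℕ, (1 - x m)) = ∑' m : ℕ, Real.log (1 - x m) := by
    rw [← hexp, Real.log_exp]
  rw [hlogprod, ← tsum_neg]
  have hle : ∑' m : ℕ, -Real.log (1 - x m) ≤ 1/4 * (1 / ((N:ℝ) + 1)) := by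
    rw [← hsumg.tsum_eq]
    exact hsumL.tsum_le_tsum hbound hsumg.summable
  have hN' : (5:ℝ) ≤ (N:ℝ) := by exact_mod_cast hN
  have hfin : 1/4 * (1 / ((N:ℝ) + 1)) < 1 / (2 * (2 * (N:ℝ) + 1)) := by
    rw [one_div_mul_one_div]
    exact one_div_lt_one_div_of_lt (by linarith) (by linarith)
  linarith

theorem stmt14 (k N : ℕ) (hk : 2 ≤ k) (hN : 5 ≤ N) :
    -Real.log (∏' m : ℕ,
        (1 - ((Nat.nth Nat.Prime (N + m) : ℝ) - 1) ^ k /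
          ((Nat.nth Nat.Prime (N + m) : ℝ) ^ k * ((Nat.nth Nat.Prime (N + m) : ℝ) ^ k - 1))))
      < 1 / (2 * (2 * (N : ℝ) + 1)) := by
  have hkey : ∀ m : ℕ,
      0 < 1 - ((Nat.nth Nat.Prime (N + m) : ℝ) - 1) ^ k /
          ((Nat.nth Nat.Prime (N + m) : ℝ) ^ k * ((Nat.nth Nat.Prime (N + m) : ℝ) ^ k - 1)) ∧
      0 ≤ ((Nat.nth Nat.Prime (N + m) : ℝ) - 1) ^ k /
          ((Nat.nth Nat.Prime (N + m) : ℝ) ^ k * ((Nat.nth Nat.Prime (N + m) : ℝ) ^ k - 1)) ∧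
      -Real.log (1 - ((Nat.nth Nat.Prime (N + m) : ℝ) - 1) ^ k /
          ((Nat.nth Nat.Prime (N + m) : ℝ) ^ k * ((Nat.nth Nat.Prime (N + m) : ℝ) ^ k - 1)))
        ≤ 1 / ((2 * ((N:ℝ) + m) + 3) ^ 2 - 1) := by
    intro m
    have hge : 2 * (N + m) + 3 ≤ Nat.nth Nat.Prime (N + m) := myNthPrimeGe (N + m) (by omega)
    have hge' : 2 * ((N:ℝ) + m) + 3 ≤ (Nat.nth Nat.Prime (N + m) : ℝ) := by
      exact_mod_cast hge
    have hc5 : (5:ℝ) ≤ 2 * ((N:ℝ) + m) + 3 := by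
      have h1 : (5:ℝ) ≤ (N:ℝ) := by exact_mod_cast hN
      have h2 : (0:ℝ) ≤ (m:ℝ) := Nat.cast_nonneg m
      linarith
    exact myKey k hk _ _ hc5 hge'
  exact myAux N hN (fun m => ((Nat.nth Nat.Prime (N + m) : ℝ) - 1) ^ k /
      ((Nat.nth Nat.Prime (N + m) : ℝ) ^ k * ((Nat.nth Nat.Prime (N + m) : ℝ) ^ k - 1)))
    (fun m => (hkey m).1) (fun m => (hkey m).2.1) (fun m => (hkey m).2.2)
end

section
/- Let S ⊆ ℕ be multiplicative and suppose that for every prime p, min{a ≥ 1 : p^a ∉ S} ≥ r for some fixed integer r ≥ 2 (i.e. p, p², ..., p^{r−1} ∈ S for all primes p). Define μ_S(n) = Σ_{d|n} ρ_S(d) μ(n/d). Then μ_S is multiplicative, μ_S(p^a) = ρ_S(p^a) − ρ_S(p^{a−1}), μ_S(p) = ... = μ_S(p^{r−1}) = 0 for every prime p, and |μ_S(n)| ≤ ρ_{L_r}(n) for every n, where L_r is the set of r-full numbers. -/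
def rho (S : Set ℕ) [DecidablePred (· ∈ S)] (n : ℕ) : ℤ := if n ∈ S then 1 else 0

/-- `μ_S(n) = Σ_{d | n} ρ_S(d) μ(n/d)` -/
def muS (S : Set ℕ) [DecidablePred (· ∈ S)] (n : ℕ) : ℤ :=
  ∑ d ∈ n.divisors, rho S d * (ArithmeticFunction.moebius (n / d))

/-- `n` is `r`-full: every prime dividing `n` does so to the power at least `r` -/
def IsRFull (r n : ℕ) : Prop := ∀ p ∈ n.primeFactors, p ^ r ∣ n

instance (r n : ℕ) : Decidable (IsRFull r n) := by unfold IsRFull; infer_instance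

/-- characteristic function of the `r`-full numbers -/
def rhoL (r n : ℕ) : ℤ := if IsRFull r n then 1 else 0

open ArithmeticFunction Finset

section Aux

variable (S : Set ℕ) [DecidablePred (· ∈ S)]

/-- `rho` as an arithmetic function (forced to be 0 at 0). -/
def rhoA : ArithmeticFunction ℤ :=
  ⟨fun n => if n = 0 then 0 else rho S n, by simp⟩

lemma rhoA_apply {n : ℕ} (hn : n ≠ 0) : rhoA S n = rho S n := by
  simp [rhoA, hn]

lemma muS_eq (n : ℕ) : muS S n = (rhoA S * (moebius : ArithmeticFunction ℤ)) n := by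
  rcases eq_or_ne n 0 with rfl | hn
  · simp [muS]
  · rw [mul_apply, Nat.sum_divisorsAntidiagonal (f := fun x y => rhoA S x * moebius y)]
    unfold muS
    refine Finset.sum_congr rfl fun d hd => ?_
    rw [rhoA_apply S (Nat.pos_of_mem_divisors hd).ne']

lemma rhoA_mult (h1 : 1 ∈ S)
    (hmul : ∀ m n : ℕ, 0 < m → 0 < n → Nat.Coprime m n → (m * n ∈ S ↔ m ∈ S ∧ n ∈ S)) :
    (rhoA S).IsMultiplicative := by
  constructor
  · simp [rhoA, rho, h1]
  · intro m n hc
    rcases eq_or_ne m 0 with rfl | hm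
    · have : n = 1 := by simpa [Nat.coprime_zero_left] using hc
      subst this; simp [rhoA]
    rcases eq_or_ne n 0 with rfl | hn
    · have : m = 1 := by simpa [Nat.coprime_zero_right] using hc
      subst this; simp [rhoA]
    rw [rhoA_apply S (by positivity), rhoA_apply S hm, rhoA_apply S hn]
    simp only [rho, hmul m n (Nat.pos_of_ne_zero hm) (Nat.pos_of_ne_zero hn) hc]
    by_cases h : m ∈ S <;> by_cases h' : n ∈ S <;> simp [h, h']

lemma muS_pp {p : ℕ} (hp : p.Prime) {a : ℕ} (ha : 1 ≤ a) :
    muS S (p ^ a) = rho S (p ^ a) - rho S (p ^ (a - 1)) := by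
  rw [muS_eq, mul_apply,
    Nat.sum_divisorsAntidiagonal (f := fun x y => rhoA S x * moebius y),
    Nat.sum_divisors_prime_pow hp]
  have key : ∀ i ∈ Finset.range (a + 1), i ∉ ({a - 1, a} : Finset ℕ) →
      rhoA S (p ^ i) * moebius (p ^ a / p ^ i) = 0 := by
    intro i hi hni
    simp only [Finset.mem_insert, Finset.mem_singleton, not_or] at hni
    have hia : i < a - 1 := by
      have := Finset.mem_range.mp hi
      omega
    rw [Nat.pow_div (by omega) hp.pos, moebius_apply_prime_pow hp (by omega)]
    simp only [if_neg (by omega : ¬ a - i = 1), mul_zero]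
  rw [← Finset.sum_subset (by intro x hx; simp at hx ⊢; omega) key,
    Finset.sum_pair (by omega : a - 1 ≠ a),
    Nat.pow_div (by omega) hp.pos, Nat.pow_div le_rfl hp.pos]
  have h1 : a - (a - 1) = 1 := by omega
  rw [h1, Nat.sub_self, pow_zero, moebius_apply_one,
    moebius_apply_prime_pow hp one_ne_zero, if_pos rfl,
    rhoA_apply S (pow_ne_zero _ hp.pos.ne'), rhoA_apply S (pow_ne_zero _ hp.pos.ne')]
  ring

end Aux

theorem stmt16 (S : Set ℕ) [DecidablePred (· ∈ S)] (r : ℕ) (hr : 2 ≤ r)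
    (h1 : 1 ∈ S)
    (hmul : ∀ m n : ℕ, 0 < m → 0 < n → Nat.Coprime m n → (m * n ∈ S ↔ m ∈ S ∧ n ∈ S))
    (hS : ∀ p a : ℕ, p.Prime → 1 ≤ a → a < r → p ^ a ∈ S) :
    (∀ m n : ℕ, 0 < m → 0 < n → Nat.Coprime m n → muS S (m * n) = muS S m * muS S n) ∧
    (∀ p a : ℕ, p.Prime → 1 ≤ a → muS S (p ^ a) = rho S (p ^ a) - rho S (p ^ (a - 1))) ∧
    (∀ p a : ℕ, p.Prime → 1 ≤ a → a ≤ r - 1 → muS S (p ^ a) = 0) ∧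
    (∀ n : ℕ, 0 < n → |muS S n| ≤ rhoL r n) := by
  have hmultA : ((rhoA S) * (moebius : ArithmeticFunction ℤ)).IsMultiplicative :=
    (rhoA_mult S h1 hmul).mul isMultiplicative_moebius
  have part3 : ∀ p a : ℕ, p.Prime → 1 ≤ a → a ≤ r - 1 → muS S (p ^ a) = 0 := by
    intro p a hp ha har
    rw [muS_pp S hp ha]
    have hin : p ^ a ∈ S := hS p a hp ha (by omega)
    have hin' : p ^ (a - 1) ∈ S := by
      by_cases h : a = 1
      · subst h; simpa using h1
      · exact hS p (a - 1) hp (by omega) (by omega)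
    simp [rho, hin, hin']
  have habs : ∀ p a : ℕ, p.Prime → 1 ≤ a → |muS S (p ^ a)| ≤ 1 := by
    intro p a hp ha
    rw [muS_pp S hp ha]
    unfold rho
    split <;> split <;> simp
  refine ⟨?_, fun p a hp ha => muS_pp S hp ha, part3, ?_⟩
  · intro m n hm hn hc
    rw [muS_eq, muS_eq, muS_eq, hmultA.map_mul_of_coprime hc]
  · intro n hn
    rw [muS_eq, hmultA.multiplicative_factorization _ hn.ne', Finsupp.prod]
    rw [Nat.support_factorization]
    by_cases hrf : IsRFull r n
    · rw [rhoL, if_pos hrf, abs_prod]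
      refine Finset.prod_le_one (fun p _ => abs_nonneg _) ?_
      intro p hp
      have hp' : p.Prime := Nat.prime_of_mem_primeFactors hp
      have ha : 1 ≤ n.factorization p :=
        hp'.factorization_pos_of_dvd hn.ne' (Nat.dvd_of_mem_primeFactors hp)
      rw [← muS_eq]
      exact habs p _ hp' ha
    · rw [rhoL, if_neg hrf]
      simp only [IsRFull, not_forall] at hrf
      obtain ⟨p, hpmem, hpnd⟩ := hrf
      have hp' : p.Prime := Nat.prime_of_mem_primeFactors hpmem
      have ha : 1 ≤ n.factorization p :=
        hp'.factorization_pos_of_dvd hn.ne' (Nat.dvd_of_mem_primeFactors hpmem)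
      have har : n.factorization p < r := by
        by_contra h
        exact hpnd ((pow_dvd_pow p (le_of_not_gt h)).trans (Nat.ordProj_dvd n p))
      have hz : ((rhoA S) * (moebius : ArithmeticFunction ℤ)) (p ^ n.factorization p) = 0 := by
        rw [← muS_eq]
        exact part3 p _ hp' ha (by omega)
      rw [Finset.prod_eq_zero hpmem hz]
      simp
end
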